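/- arXiv:2312.13840 — 5 statements merged into one kernel-verified Lean document; each statement's English description precedes it below -/
import Mathlib

section
/- Let A, B, C be real numbers with A ≠ 0 and C² − 4AB > 0, and set p₁ = (−C + √(C² − 4AB))/(2A). Then for all (x,y,z) ∈ ℝ³, G_{A,B,C}(x − A·p₁, y + p₁, z − p₁) = F_{a,b,c}(x,y,z), where a = A, b = −p₁ and c = C + A·p₁. That is, the translation (x,y,z) ↦ (x − A·p₁, y + p₁, z − p₁) is a change of coordinates carrying the vector field F_{a,b,c} to the vector field G_{A,B,C}. -/
/-- The Rössler vector field with parameters `(a, b, c)`: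
`F_{a,b,c}(x,y,z) = (−y − z, x + ay, bx + z(x − c))`. -/
def rossler (a b c : ℝ) : ℝ × ℝ × ℝ → ℝ × ℝ × ℝ :=
  fun p => (-p.2.1 - p.2.2, p.1 + a * p.2.1, b * p.1 + p.2.2 * (p.1 - c))

/-- The original Rössler vector field with parameters `(A, B, C)`:
`G_{A,B,C}(X,Y,Z) = (−Y − Z, X + AY, B + Z(X − C))`. -/
def rosslerOrig (A B C : ℝ) : ℝ × ℝ × ℝ → ℝ × ℝ × ℝ :=
  fun p => (-p.2.1 - p.2.2, p.1 + A * p.2.1, B + p.2.2 * (p.1 - C))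

/-- The translation `(x,y,z) ↦ (x − A·p₁, y + p₁, z − p₁)`, with
`p₁ = (−C + √(C² − 4AB))/(2A)`, carries the vector field `F_{a,b,c}` (with `a = A`,
`b = −p₁`, `c = C + A·p₁`) to the vector field `G_{A,B,C}`. -/
theorem rossler_change_of_coordinates (A B C : ℝ) (hA : A ≠ 0)
    (hdisc : C ^ 2 - 4 * A * B > 0) :
    ∀ x y z : ℝ,
      rosslerOrig A B C
          (x - A * ((-C + Real.sqrt (C ^ 2 - 4 * A * B)) / (2 * A)),
            y + (-C + Real.sqrt (C ^ 2 - 4 * A * B)) / (2 * A),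
            z - (-C + Real.sqrt (C ^ 2 - 4 * A * B)) / (2 * A)) =
        rossler A (-((-C + Real.sqrt (C ^ 2 - 4 * A * B)) / (2 * A)))
          (C + A * ((-C + Real.sqrt (C ^ 2 - 4 * A * B)) / (2 * A))) (x, y, z) := by
  intro x y z
  have hs : Real.sqrt (C ^ 2 - 4 * A * B) ^ 2 = C ^ 2 - 4 * A * B :=
    Real.sq_sqrt hdisc.le
  simp only [rossler, rosslerOrig, Prod.mk.injEq]
  refine ⟨by ring, by ring, ?_⟩
  field_simp
  nlinarith [hs, Real.sq_sqrt (show (0:ℝ) ≤ C ^ 2 - B * 4 * A by linarith)]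
end

section
/- Let a, b, c be real numbers with a > 0, and let N = (1, a, 0). For every point s = (x, −x/a, z) with z > x/a one has F_{a,b,c}(s) • N < 0, and for every point s = (x, −x/a, z) with z < x/a one has F_{a,b,c}(s) • N > 0. In particular the vector field F_{a,b,c} is transverse to both open half-planes U = {(x, −x/a, z) : z > x/a} and L = {(x, −x/a, z) : z < x/a}. -/
/-- The Euclidean inner product on `ℝ³`. -/
def dot3 (u v : ℝ × ℝ × ℝ) : ℝ :=
  u.1 * v.1 + u.2.1 * v.2.1 + u.2.2 * v.2.2

/-- The Rössler vector field is transverse to the two open half-planes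
`U = {(x, −x/a, z) : z > x/a}` and `L = {(x, −x/a, z) : z < x/a}`: its inner product with
`N = (1, a, 0)` is negative on `U` and positive on `L`. -/
theorem rossler_transverse_halfplanes (a b c : ℝ) (ha : 0 < a) :
    (∀ x z : ℝ, x / a < z → dot3 (rossler a b c (x, -x / a, z)) (1, a, 0) < 0) ∧
    (∀ x z : ℝ, z < x / a → 0 < dot3 (rossler a b c (x, -x / a, z)) (1, a, 0)) := by
  have key : ∀ x z : ℝ, dot3 (rossler a b c (x, -x / a, z)) (1, a, 0) = x / a - z := by
    intro x z
    simp only [dot3, rossler]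
    field_simp
    ring
  constructor <;> intro x z h <;> rw [key] <;> linarith
end

section
/- Let a, b ∈ (0,1) and c > 1. Define the three surfaces R₁ = {(x, −x/a, z) : −x/a > b+1, z < x/a}, R₂ = {(x, −z, z) : x − az < 0, z ≤ −(b+1)}, R₃ = {(x, b+1, z) : −z − (b+1) ≥ 0, x + a(b+1) < 0}, with respective outward normal vectors r₁ = (1, a, 0), r₂ = (0, 1, 1), r₃ = (0, −1, 0). Then for every i ∈ {1,2,3} and every point v ∈ Rᵢ, F_{a,b,c}(v) • rᵢ > 0; that is, the vector field F_{a,b,c} points strictly outward along all three boundary surfaces of the region R = {(x,y,z) : x + ay < 0, −y − z > 0, y > b+1}. -/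
/-- For `a, b ∈ (0,1)`, `c > 1`, the Rössler vector field points strictly outward (positive
inner product with the respective outward normals `r₁ = (1,a,0)`, `r₂ = (0,1,1)`,
`r₃ = (0,−1,0)`) along the three boundary surfaces
`R₁ = {(x, −x/a, z) : −x/a > b+1, z < x/a}`,
`R₂ = {(x, −z, z) : x − az < 0, z ≤ −(b+1)}`,
`R₃ = {(x, b+1, z) : −z − (b+1) ≥ 0, x + a(b+1) < 0}` of the region
`R = {x + ay < 0, −y − z > 0, y > b+1}`. -/
theorem rossler_outward_on_R (a b c : ℝ) (ha : a ∈ Set.Ioo (0 : ℝ) 1)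
    (hb : b ∈ Set.Ioo (0 : ℝ) 1) (hc : 1 < c) :
    (∀ x z : ℝ, b + 1 < -x / a → z < x / a →
      0 < dot3 (rossler a b c (x, -x / a, z)) (1, a, 0)) ∧
    (∀ x z : ℝ, x - a * z < 0 → z ≤ -(b + 1) →
      0 < dot3 (rossler a b c (x, -z, z)) (0, 1, 1)) ∧
    (∀ x z : ℝ, 0 ≤ -z - (b + 1) → x + a * (b + 1) < 0 →
      0 < dot3 (rossler a b c (x, b + 1, z)) (0, -1, 0)) := by
  obtain ⟨ha0, ha1⟩ := ha
  obtain ⟨hb0, hb1⟩ := hb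
  refine ⟨fun x z h1 h2 => ?_, fun x z h1 h2 => ?_, fun x z h1 h2 => ?_⟩
  · simp only [rossler, dot3]
    have : z * a < x := (lt_div_iff₀ ha0).mp h2
    field_simp
    nlinarith
  · simp only [rossler, dot3]
    have hz : z ≤ -(b+1) := h2
    have hx : x < a * z := by linarith
    have hxneg : x < 0 := lt_trans hx (by nlinarith)
    have h3 : 0 ≤ x * (1 + b + z) := by nlinarith [mul_nonneg (neg_nonneg.mpr hxneg.le) (neg_nonneg.mpr (show (1:ℝ)+b+z ≤ 0 by linarith))]
    nlinarith
  · simp only [rossler, dot3]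
    nlinarith
end

section
/- Let c ∈ [−2, 1/4] and set x₁ = (1 + √(1 − 4c))/2. Then for every x ∈ ℝ with |x| > x₁, the iterates of x under p_c tend to infinity: p_cⁿ(x) → +∞ as n → ∞. -/
/-- For `c ∈ [−2, 1/4]` and `x₁ = (1 + √(1 − 4c))/2`, every point `x` with `|x| > x₁`
escapes to `+∞` under iteration of `p_c(x) = x² + c`. -/
theorem quadratic_escape_to_infinity (c : ℝ) (hc : c ∈ Set.Icc (-2 : ℝ) (1 / 4)) :
    ∀ x : ℝ, (1 + Real.sqrt (1 - 4 * c)) / 2 < |x| →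
      Filter.Tendsto (fun n : ℕ => (fun y : ℝ => y ^ 2 + c)^[n] x)
        Filter.atTop Filter.atTop := by
  intro x hx
  set f : ℝ → ℝ := fun y => y ^ 2 + c with hf
  set s := Real.sqrt (1 - 4 * c) with hsdef
  have hs2 : s ^ 2 = 1 - 4 * c := Real.sq_sqrt (by linarith [hc.2])
  have hs0 : (0 : ℝ) ≤ s := Real.sqrt_nonneg _
  have hax : 1 / 2 < |x| := by linarith
  set δ : ℝ := |x| ^ 2 + c - |x| with hδdef
  have hδ : 0 < δ := by nlinarith [abs_nonneg x]
  have key : ∀ n : ℕ, |x| + (n + 1 : ℝ) * δ ≤ f^[n + 1] x := by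
    intro n
    induction n with
    | zero =>
      simp only [zero_add, Function.iterate_one, hf]
      push_cast
      nlinarith [sq_abs x]
    | succ n ih =>
      rw [Function.iterate_succ_apply']
      have ha : |x| ≤ f^[n + 1] x := by
        have : 0 ≤ ((n : ℝ) + 1) * δ := by positivity
        linarith
      have : f^[n + 1] x + δ ≤ (f^[n + 1] x) ^ 2 + c := by
        nlinarith [ha, hax, hδ]
      push_cast
      simp only [hf]
      push_cast at ih
      linarith
  have hcomp : Filter.Tendsto (fun n : ℕ => |x| + (n : ℝ) * δ) Filter.atTop Filter.atTop := by
    apply Filter.tendsto_atTop_add_const_left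
    exact (Filter.tendsto_atTop_mono (fun n => le_refl _))
      ((tendsto_natCast_atTop_atTop).atTop_mul_const hδ)
  refine Filter.tendsto_atTop_mono' _ ?_ hcomp
  filter_upwards [Filter.eventually_ge_atTop 1] with n hn
  obtain ⟨m, rfl⟩ := Nat.exists_eq_add_of_le hn
  rw [add_comm 1 m]
  have := key m
  push_cast at this ⊢
  linarith
end

section
/- Let c ∈ [−2, 1/4] and set x₁ = (1 + √(1 − 4c))/2. Then the forward orbit of the critical point 0 under p_c is bounded; more precisely, p_cⁿ(0) ∈ [−x₁, x₁] for every n ≥ 0. -/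
/-- For `c ∈ [−2, 1/4]` and `x₁ = (1 + √(1 − 4c))/2`, the forward orbit of the critical
point `0` under `p_c(x) = x² + c` remains in `[−x₁, x₁]` for all `n ≥ 0`. -/
theorem quadratic_critical_orbit_bounded (c : ℝ) (hc : c ∈ Set.Icc (-2 : ℝ) (1 / 4)) :
    ∀ n : ℕ, (fun y : ℝ => y ^ 2 + c)^[n] 0 ∈
      Set.Icc (-((1 + Real.sqrt (1 - 4 * c)) / 2)) ((1 + Real.sqrt (1 - 4 * c)) / 2) := by
  obtain ⟨hc1, hc2⟩ := hc
  set s := Real.sqrt (1 - 4 * c) with hs_def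
  have hs0 : 0 ≤ s := Real.sqrt_nonneg _
  have hs2 : s ^ 2 = 1 - 4 * c := Real.sq_sqrt (by linarith)
  have hs3 : s ≤ 3 := by nlinarith
  intro n
  induction n with
  | zero =>
    simp only [Function.iterate_zero, id_eq, Set.mem_Icc]
    constructor <;> nlinarith
  | succ n ih =>
    rw [Function.iterate_succ_apply']
    obtain ⟨h1, h2⟩ := ih
    set x := (fun y : ℝ => y ^ 2 + c)^[n] 0
    simp only [Set.mem_Icc]
    constructor
    · nlinarith
    · nlinarith [sq_nonneg (x - (1 + s) / 2), sq_nonneg (x + (1 + s) / 2)]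
end
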